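/- Let M be a loopless matroid and F ∈ N°(M) a flag of nonempty proper flats not containing the ground set E. Then the reduced characteristic polynomial χ̄_{M_F}(q) is divisible by (q−1)^{#F} in ℤ[q]. -/

import Mathlib

open Polynomial

namespace MatroidZeta

open scoped Classical

variable {α : Type*}

/-- The `q`-analogue `[n]_q = 1 + q + ⋯ + q^(n-1)` of a natural number `n`, in `ℤ[q]`. -/
noncomputable def qAnalogue (n : ℕ) : Polynomial ℤ := ∑ i ∈ Finset.range n, X ^ i

/-- The rank of a set `X` in a matroid `M`: the largest size of an independent subset of `X`. -/
noncomputable def rk (M : Matroid α) (X : Set α) : ℕ :=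
  sSup {n | ∃ I, M.Indep I ∧ I ⊆ X ∧ I.ncard = n}

/-- Contraction `M / C` of a matroid, defined as the dual of the deletion of `C`
from the dual matroid. -/
noncomputable def contract (M : Matroid α) (C : Set α) : Matroid α :=
  ((M✶.restrict (M✶.E \ C))✶)

/-- A matroid is loopless if no element of the ground set lies in the closure of `∅`. -/
def Loopless (M : Matroid α) : Prop := M.closure ∅ = ∅

/-- The characteristic polynomial `χ_M(q) = ∑_{S ⊆ E} (-1)^{#S} q^(rk M - rk S)`. -/
noncomputable def charPoly (M : Matroid α) : Polynomial ℤ :=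
  ∑ᶠ S ∈ {S : Set α | S ⊆ M.E}, (-1 : ℤ) ^ S.ncard • (X : Polynomial ℤ) ^ (rk M M.E - rk M S)

/-- The reduced characteristic polynomial
`χ̄_M(q) = χ_M(q)/(q-1) = ∑_{S ⊆ E} (-1)^{#S} [rk M - rk S]_q`. -/
noncomputable def redCharPoly (M : Matroid α) : Polynomial ℤ :=
  ∑ᶠ S ∈ {S : Set α | S ⊆ M.E}, (-1 : ℤ) ^ S.ncard • qAnalogue (rk M M.E - rk M S)

/-- `wt_M(w) = max_{B basis of M} ∑_{e ∈ B} w e`. -/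
noncomputable def wt (M : Matroid α) (w : α → ℝ) : ℝ :=
  sSup {x | ∃ B, M.IsBase B ∧ x = ∑ᶠ e ∈ B, w e}

/-- The initial matroid `M_w`: the matroid on the ground set of `M` whose bases are the
bases of `M` of maximal `w`-weight.  (Such a matroid exists and is unique.) -/
noncomputable def initialMatroid (M : Matroid α) (w : α → ℝ) : Matroid α :=
  if h : ∃ N : Matroid α, N.E = M.E ∧
      ∀ B, N.IsBase B ↔ M.IsBase B ∧ ∑ᶠ e ∈ B, w e = wt M w
  then h.choose else M

/-- A flag of non-minimal flats of `M`: a chain of flats strictly above `cl(∅)`. -/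
def IsFlag (M : Matroid α) (C : Finset (Set α)) : Prop :=
  (∀ F ∈ C, M.IsFlat F ∧ M.closure ∅ ⊂ F) ∧ IsChain (· ⊆ ·) (C : Set (Set α))

/-- `N(M)`: the set of flags of non-minimal flats of `M`. -/
def flags (M : Matroid α) : Set (Finset (Set α)) := {C | IsFlag M C}

/-- `N°(M)`: flags not containing the ground set. -/
def flagsCirc (M : Matroid α) : Set (Finset (Set α)) := {C | IsFlag M C ∧ M.E ∉ C}

/-- `N*(M)`: flags containing the ground set. -/
def flagsStar (M : Matroid α) : Set (Finset (Set α)) := {C | IsFlag M C ∧ M.E ∈ C}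

/-- `z_C(F)`: the largest member of the chain `C` strictly below `F` (or `∅` if none). -/
def zmin (C : Finset (Set α)) (F : Set α) : Set α := ⋃₀ {G | G ∈ C ∧ G ⊂ F}

/-- The weight vector `∑_{F ∈ C} v_F`, a point in the relative interior of the cone `σ_C`. -/
noncomputable def flagWeight (C : Finset (Set α)) : α → ℝ :=
  fun e => ∑ F ∈ C, if e ∈ F then (1 : ℝ) else 0

/-- The initial matroid `M_C` of a flag `C`. -/
noncomputable def flagMatroid (M : Matroid α) (C : Finset (Set α)) : Matroid α :=
  initialMatroid M (flagWeight C)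

/-! ### Auxiliary rank lemmas -/

section RankLemmas

variable {M : Matroid α} {I J S X Y Z A : Set α}

lemma ncard_le_ncard_basis (hE : M.E.Finite) (hJ : M.Indep J) (hJX : J ⊆ X)
    (hIX : M.IsBasis I X) : J.ncard ≤ I.ncard := by
  obtain ⟨J', hJ', hJJ'⟩ := hJ.subset_isBasis_of_subset hJX hIX.subset_ground
  have h1 : J.ncard ≤ J'.ncard :=
    Set.ncard_le_ncard hJJ' (hE.subset hJ'.indep.subset_ground)
  have h2 : J'.ncard = I.ncard := by
    have h := hJ'.encard_eq_encard hIX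
    rw [Set.ncard_def, Set.ncard_def, h]
  omega

lemma rk_eq_ncard_of_basis (hE : M.E.Finite) (hIX : M.IsBasis I X) : rk M X = I.ncard := by
  have hbdd : ∀ m ∈ {n | ∃ I₀, M.Indep I₀ ∧ I₀ ⊆ X ∧ I₀.ncard = n}, m ≤ I.ncard := by
    rintro m ⟨J, hJ, hJX, rfl⟩
    exact ncard_le_ncard_basis hE hJ hJX hIX
  refine le_antisymm (csSup_le ⟨0, ∅, M.empty_indep, Set.empty_subset _, by simp⟩ hbdd)
    (le_csSup ⟨I.ncard, hbdd⟩ ⟨I, hIX.indep, hIX.subset, rfl⟩)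

lemma exists_basis_rk (hE : M.E.Finite) (hX : X ⊆ M.E) :
    ∃ I, M.IsBasis I X ∧ rk M X = I.ncard := by
  obtain ⟨I, hI⟩ := M.exists_isBasis X hX
  exact ⟨I, hI, rk_eq_ncard_of_basis hE hI⟩

lemma ncard_le_rk (hE : M.E.Finite) (hJ : M.Indep J) (hJX : J ⊆ X) (hX : X ⊆ M.E) :
    J.ncard ≤ rk M X := by
  obtain ⟨I, hI, hrk⟩ := exists_basis_rk hE hX
  rw [hrk]
  exact ncard_le_ncard_basis hE hJ hJX hI

lemma rk_indep (hE : M.E.Finite) (hI : M.Indep I) : rk M I = I.ncard :=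
  rk_eq_ncard_of_basis hE hI.isBasis_self

lemma rk_empty (hE : M.E.Finite) : rk M ∅ = 0 := by
  rw [rk_eq_ncard_of_basis hE M.empty_indep.isBasis_self, Set.ncard_empty]

lemma rk_mono (hE : M.E.Finite) (hXY : X ⊆ Y) (hY : Y ⊆ M.E) : rk M X ≤ rk M Y := by
  obtain ⟨I, hI, hrk⟩ := exists_basis_rk hE (hXY.trans hY)
  rw [hrk]
  exact ncard_le_rk hE hI.indep (hI.subset.trans hXY) hY

lemma rk_union_ncard_le (hE : M.E.Finite) (hX : X ⊆ M.E) (hA : A ⊆ M.E) :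
    rk M (X ∪ A) ≤ rk M X + A.ncard := by
  obtain ⟨J, hJ, hrk⟩ := exists_basis_rk hE (Set.union_subset hX hA)
  have hJfin : J.Finite := hE.subset hJ.indep.subset_ground
  have h1 : (J ∩ X).ncard + (J \ X).ncard = J.ncard :=
    Set.ncard_inter_add_ncard_diff_eq_ncard J X hJfin
  have h2 : (J ∩ X).ncard ≤ rk M X :=
    ncard_le_rk hE (hJ.indep.subset Set.inter_subset_left) Set.inter_subset_right hX
  have h3 : (J \ X).ncard ≤ A.ncard := by
    refine Set.ncard_le_ncard ?_ (hE.subset hA)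
    intro x hx
    rcases hJ.subset hx.1 with h | h
    · exact absurd h hx.2
    · exact h
  omega

lemma basis_of_indep_rk_le (hE : M.E.Finite) (hI : M.Indep I) (hIX : I ⊆ X)
    (hX : X ⊆ M.E) (hcard : rk M X ≤ I.ncard) : M.IsBasis I X := by
  obtain ⟨J, hJ, hIJ⟩ := hI.subset_isBasis_of_subset hIX hX
  have hJI : J.ncard ≤ I.ncard := by
    rw [← rk_eq_ncard_of_basis hE hJ]; exact hcard
  have : I = J := Set.eq_of_subset_of_ncard_le hIJ hJI (hE.subset hJ.indep.subset_ground)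
  rwa [this]

/-- If `rk (Z ∪ A) = rk Z + |A|` then any basis of `Z` stays independent with `A` added. -/
lemma indep_basis_union_of_rk (hE : M.E.Finite) (hZ : Z ⊆ M.E) (hA : A ⊆ M.E)
    (hdisj : Disjoint A Z) (hS : M.IsBasis S Z)
    (hrk : rk M Z + A.ncard ≤ rk M (Z ∪ A)) : M.Indep (S ∪ A) := by
  obtain ⟨T, hT, hST⟩ := hS.indep.subset_isBasis_of_subset
    (hS.subset.trans Set.subset_union_left) (Set.union_subset hZ hA)
  have hTfin : T.Finite := hE.subset hT.indep.subset_ground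
  have hTcard : T.ncard = rk M (Z ∪ A) := (rk_eq_ncard_of_basis hE hT).symm
  have h1 : (T ∩ Z).ncard + (T \ Z).ncard = T.ncard :=
    Set.ncard_inter_add_ncard_diff_eq_ncard T Z hTfin
  have h2 : (T ∩ Z).ncard ≤ rk M Z :=
    ncard_le_rk hE (hT.indep.subset Set.inter_subset_left) Set.inter_subset_right hZ
  have h3 : T \ Z ⊆ A := by
    intro x hx
    rcases hT.subset hx.1 with h | h
    · exact absurd h hx.2
    · exact h
  have h4 : A.ncard ≤ (T \ Z).ncard := by omega
  have h5 : T \ Z = A := Set.eq_of_subset_of_ncard_le h3 h4 (hE.subset hA)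
  refine hT.indep.subset (Set.union_subset hST ?_)
  rw [← h5]; exact Set.diff_subset

lemma rk_union_eq_of_indep (hE : M.E.Finite) (hZ : Z ⊆ M.E)
    (hdisj : Disjoint A Z) (hS : M.IsBasis S Z) (hind : M.Indep (S ∪ A)) :
    rk M (Z ∪ A) = rk M Z + A.ncard := by
  have hA : A ⊆ M.E := Set.union_subset_iff.mp hind.subset_ground |>.2
  refine le_antisymm (rk_union_ncard_le hE hZ hA) ?_
  have hSA : (S ∪ A).ncard = S.ncard + A.ncard := by
    rw [Set.union_comm, Set.ncard_union_eq (hdisj.mono_right hS.subset)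
      (hE.subset hA) (hE.subset hS.indep.subset_ground), Nat.add_comm]
  have hle : (S ∪ A).ncard ≤ rk M (Z ∪ A) :=
    ncard_le_rk hE hind (Set.union_subset_union_left A hS.subset)
      (Set.union_subset hZ hA)
  rw [hSA, rk_eq_ncard_of_basis hE hS] at *
  omega

end RankLemmas

/-! ### Chains and the layered (initial) matroid -/

section ChainMatroid

variable {M : Matroid α} {F : ℕ → Set α} {n : ℕ} {I J : Set α}

/-- Data of a strictly increasing chain `∅ = F 0 ⊂ F 1 ⊂ ⋯ ⊂ F n = M.E`. -/
structure ChainData (M : Matroid α) (F : ℕ → Set α) (n : ℕ) : Prop where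
  hE : M.E.Finite
  h0 : F 0 = ∅
  htop : F n = M.E
  hlt : ∀ i < n, F i ⊂ F (i + 1)

lemma ChainData.mono (hD : ChainData M F n) :
    ∀ {i j : ℕ}, i ≤ j → j ≤ n → F i ⊆ F j := by
  intro i j
  induction j with
  | zero => intro hij _; rw [Nat.le_zero.mp hij]
  | succ j ih =>
    intro hij hj
    rcases Nat.lt_or_ge i (j + 1) with h | h
    · exact (ih (by omega) (by omega)).trans (hD.hlt j (by omega)).subset
    · have : i = j + 1 := by omega
      rw [this]

lemma ChainData.subset_ground (hD : ChainData M F n) {i : ℕ} (hi : i ≤ n) :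
    F i ⊆ M.E := hD.htop ▸ hD.mono hi le_rfl

/-- The `i`-th layer of the chain. -/
def layer (F : ℕ → Set α) (i : ℕ) : Set α := F (i + 1) \ F i

lemma layer_disjoint_self (F : ℕ → Set α) (i : ℕ) : Disjoint (layer F i) (F i) :=
  Set.disjoint_sdiff_left

lemma ChainData.layer_subset_ground (hD : ChainData M F n) {i : ℕ} (hi : i < n) :
    layer F i ⊆ M.E :=
  Set.diff_subset.trans (hD.subset_ground hi)

lemma ChainData.layer_subset (hD : ChainData M F n) {i j : ℕ} (hij : i < j) (hj : j ≤ n) :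
    layer F i ⊆ F j :=
  Set.diff_subset.trans (hD.mono hij hj)

lemma ChainData.layer_disjoint (hD : ChainData M F n) {i j : ℕ} (hij : i ≠ j)
    (hi : i < n) (hj : j < n) : Disjoint (layer F i) (layer F j) := by
  rcases Nat.lt_or_ge i j with h | h
  · exact (layer_disjoint_self F j).symm.mono_left (hD.layer_subset h hj.le)
  · have h' : j < i := by omega
    exact ((layer_disjoint_self F i).symm.mono_left (hD.layer_subset h' hi.le)).symm

/-- The independence predicate of the layered matroid. -/
def IndN (M : Matroid α) (F : ℕ → Set α) (n : ℕ) (I : Set α) : Prop :=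
  I ⊆ M.E ∧ ∀ i < n, rk M (F i ∪ I ∩ layer F i) = rk M (F i) + (I ∩ layer F i).ncard

lemma ChainData.inter_layer_disjoint (hD : ChainData M F n) (I : Set α) (i : ℕ) :
    Disjoint (I ∩ layer F i) (F i) :=
  (layer_disjoint_self F i).mono_left Set.inter_subset_right

lemma ChainData.ncard_inter_chain (hD : ChainData M F n) (hI : I ⊆ M.E) (hIfin : I.Finite) :
    ∀ {j : ℕ}, j ≤ n → (I ∩ F j).ncard = ∑ i ∈ Finset.range j, (I ∩ layer F i).ncard := by
  intro j
  induction j with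
  | zero => intro _; simp [hD.h0]
  | succ j ih =>
    intro hj
    have hsplit : I ∩ F (j + 1) = (I ∩ F j) ∪ (I ∩ layer F j) := by
      rw [layer, ← Set.inter_union_distrib_left,
        Set.union_diff_cancel (hD.hlt j hj).subset]
    have hdisj : Disjoint (I ∩ F j) (I ∩ layer F j) :=
      ((layer_disjoint_self F j).mono_left Set.inter_subset_right).symm.mono_left
        Set.inter_subset_right
    rw [hsplit, Set.ncard_union_eq hdisj (hIfin.subset Set.inter_subset_left)
      (hIfin.subset Set.inter_subset_left), ih (by omega), Finset.sum_range_succ]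

lemma ChainData.ncard_eq_sum_layers (hD : ChainData M F n) (hI : I ⊆ M.E) :
    I.ncard = ∑ i ∈ Finset.range n, (I ∩ layer F i).ncard := by
  have h := hD.ncard_inter_chain hI (hD.hE.subset hI) (le_refl n)
  rwa [hD.htop, Set.inter_eq_left.mpr hI] at h

lemma ChainData.rk_telescope (hD : ChainData M F n) :
    ∀ {j : ℕ}, j ≤ n →
      ∑ i ∈ Finset.range j, (rk M (F (i + 1)) - rk M (F i)) = rk M (F j) := by
  intro j
  induction j with
  | zero => intro _; simp [hD.h0, rk_empty hD.hE]
  | succ j ih =>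
    intro hj
    have hmono : rk M (F j) ≤ rk M (F (j + 1)) :=
      rk_mono hD.hE (hD.hlt j hj).subset (hD.subset_ground hj)
    rw [Finset.sum_range_succ, ih (by omega)]
    omega

lemma ChainData.indN_layer_le (hD : ChainData M F n) (hI : IndN M F n I) {i : ℕ}
    (hi : i < n) : rk M (F i) + (I ∩ layer F i).ncard ≤ rk M (F (i + 1)) := by
  rw [← hI.2 i hi]
  refine rk_mono hD.hE (Set.union_subset (hD.hlt i hi).subset ?_) (hD.subset_ground hi)
  exact Set.inter_subset_right.trans Set.diff_subset

lemma ChainData.indN_ncard_le (hD : ChainData M F n) (hI : IndN M F n I) :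
    I.ncard ≤ rk M M.E := by
  rw [hD.ncard_eq_sum_layers hI.1, ← hD.htop, ← hD.rk_telescope (le_refl n)]
  refine Finset.sum_le_sum fun i hi => ?_
  have := hD.indN_layer_le hI (Finset.mem_range.mp hi)
  omega

lemma ChainData.indN_empty (hD : ChainData M F n) : IndN M F n ∅ := by
  refine ⟨Set.empty_subset _, fun i hi => by simp⟩

lemma ChainData.indN_subset (hD : ChainData M F n) (hJ : IndN M F n J) (hIJ : I ⊆ J) :
    IndN M F n I := by
  refine ⟨hIJ.trans hJ.1, fun i hi => ?_⟩
  have hFi : F i ⊆ M.E := hD.subset_ground hi.le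
  obtain ⟨S, hS, _⟩ := exists_basis_rk hD.hE hFi
  have hindJ : M.Indep (S ∪ J ∩ layer F i) :=
    indep_basis_union_of_rk hD.hE hFi (Set.inter_subset_left.trans hJ.1)
      (hD.inter_layer_disjoint J i) hS (le_of_eq (hJ.2 i hi).symm)
  have hII : I ∩ layer F i ⊆ J ∩ layer F i := Set.inter_subset_inter_left _ hIJ
  exact rk_union_eq_of_indep hD.hE hFi ((hD.inter_layer_disjoint J i).mono_left hII) hS
    (hindJ.subset (Set.union_subset_union_right _ hII))

lemma ChainData.indN_aug (hD : ChainData M F n) (hI : IndN M F n I) (hJ : IndN M F n J)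
    (hcard : I.ncard < J.ncard) : ∃ e ∈ J, e ∉ I ∧ IndN M F n (insert e I) := by
  have hIsum := hD.ncard_eq_sum_layers hI.1
  have hJsum := hD.ncard_eq_sum_layers hJ.1
  have hex : ∃ i ∈ Finset.range n, (I ∩ layer F i).ncard < (J ∩ layer F i).ncard := by
    by_contra h
    push_neg at h
    have := Finset.sum_le_sum h
    omega
  obtain ⟨i, hi', hlt⟩ := hex
  have hi : i < n := Finset.mem_range.mp hi'
  have hFi : F i ⊆ M.E := hD.subset_ground hi.le
  obtain ⟨S, hS, _⟩ := exists_basis_rk hD.hE hFi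
  have hSfin : S.Finite := hD.hE.subset hS.indep.subset_ground
  have hindSI : M.Indep (S ∪ I ∩ layer F i) :=
    indep_basis_union_of_rk hD.hE hFi (Set.inter_subset_left.trans hI.1)
      (hD.inter_layer_disjoint I i) hS (le_of_eq (hI.2 i hi).symm)
  have hindSJ : M.Indep (S ∪ J ∩ layer F i) :=
    indep_basis_union_of_rk hD.hE hFi (Set.inter_subset_left.trans hJ.1)
      (hD.inter_layer_disjoint J i) hS (le_of_eq (hJ.2 i hi).symm)
  have hdS : ∀ K : Set α, Disjoint S (K ∩ layer F i) := fun K =>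
    (((layer_disjoint_self F i).mono_left Set.inter_subset_right).mono_right
      hS.subset).symm
  have hencard : (S ∪ I ∩ layer F i).encard < (S ∪ J ∩ layer F i).encard := by
    rw [← Set.Finite.cast_ncard_eq (hD.hE.subset hindSI.subset_ground),
      ← Set.Finite.cast_ncard_eq (hD.hE.subset hindSJ.subset_ground), Nat.cast_lt,
      Set.ncard_union_eq (hdS I) hSfin (hD.hE.subset (Set.inter_subset_left.trans hI.1)),
      Set.ncard_union_eq (hdS J) hSfin (hD.hE.subset (Set.inter_subset_left.trans hJ.1))]
    omega
  obtain ⟨e, he, hins⟩ := hindSI.augment hindSJ hencard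
  have heJL : e ∈ J ∩ layer F i := by
    rcases he.1 with h | h
    · exact absurd (Or.inl h) he.2
    · exact h
  have heL : e ∈ layer F i := heJL.2
  have heI : e ∉ I := fun h => he.2 (Or.inr ⟨h, heL⟩)
  refine ⟨e, heJL.1, heI, Set.insert_subset (hJ.1 heJL.1) hI.1, fun j hj => ?_⟩
  by_cases hij : j = i
  · subst hij
    have h1 : insert e I ∩ layer F j = insert e (I ∩ layer F j) := by
      ext x
      simp only [Set.mem_inter_iff, Set.mem_insert_iff]
      constructor
      · rintro ⟨rfl | hx, hxl⟩
        · exact Or.inl rfl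
        · exact Or.inr ⟨hx, hxl⟩
      · rintro (rfl | ⟨hx, hxl⟩)
        · exact ⟨Or.inl rfl, heL⟩
        · exact ⟨Or.inr hx, hxl⟩
    rw [h1]
    have hdisj' : Disjoint (insert e (I ∩ layer F j)) (F j) := by
      rw [Set.disjoint_left]
      rintro x (rfl | hx)
      · exact fun hxF => (layer_disjoint_self F j).le_bot ⟨heL, hxF⟩
      · exact fun hxF => (hD.inter_layer_disjoint I j).le_bot ⟨hx, hxF⟩
    refine rk_union_eq_of_indep hD.hE hFi hdisj' hS ?_
    rw [Set.union_insert]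
    exact hins
  · have h2 : insert e I ∩ layer F j = I ∩ layer F j := by
      ext x
      simp only [Set.mem_inter_iff, Set.mem_insert_iff]
      constructor
      · rintro ⟨rfl | hx, hxl⟩
        · exact absurd (Set.mem_of_mem_of_subset hxl rfl.subset)
            (Set.disjoint_left.mp (hD.layer_disjoint (Ne.symm hij) hi hj) heL)
        · exact ⟨hx, hxl⟩
      · rintro ⟨hx, hxl⟩
        exact ⟨Or.inr hx, hxl⟩
    rw [h2]
    exact hI.2 j hj

end ChainMatroid

section ChainMatroid2

variable {M : Matroid α} {F : ℕ → Set α} {n : ℕ} {I J B S T X Z A : Set α}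

/-- The layered matroid associated to a chain. -/
noncomputable def chainMatroid (hD : ChainData M F n) : Matroid α :=
  (IndepMatroid.ofFinite hD.hE (IndN M F n) hD.indN_empty
    (fun _ _ hJ hIJ => hD.indN_subset hJ hIJ)
    (fun _ _ hI hJ hIJ => hD.indN_aug hI hJ hIJ)
    (fun _ hI => hI.1)).matroid

@[simp] lemma chainMatroid_ground (hD : ChainData M F n) : (chainMatroid hD).E = M.E := rfl

@[simp] lemma chainMatroid_indep (hD : ChainData M F n) :
    (chainMatroid hD).Indep I ↔ IndN M F n I := by
  simp [chainMatroid]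

lemma ChainData.indN_insert (hD : ChainData M F n) (hI : IndN M F n I) {i : ℕ}
    (hi : i < n) {x : α} (hx : x ∈ layer F i) (hxE : x ∈ M.E)
    (hcond : rk M (F i ∪ insert x (I ∩ layer F i)) =
      rk M (F i) + (insert x (I ∩ layer F i)).ncard) :
    IndN M F n (insert x I) := by
  refine ⟨Set.insert_subset hxE hI.1, fun j hj => ?_⟩
  by_cases hij : j = i
  · subst hij
    have h1 : insert x I ∩ layer F j = insert x (I ∩ layer F j) := by
      ext y
      simp only [Set.mem_inter_iff, Set.mem_insert_iff]
      constructor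
      · rintro ⟨rfl | hy, hyl⟩
        · exact Or.inl rfl
        · exact Or.inr ⟨hy, hyl⟩
      · rintro (rfl | ⟨hy, hyl⟩)
        · exact ⟨Or.inl rfl, hx⟩
        · exact ⟨Or.inr hy, hyl⟩
    rw [h1]
    exact hcond
  · have h2 : insert x I ∩ layer F j = I ∩ layer F j := by
      ext y
      simp only [Set.mem_inter_iff, Set.mem_insert_iff]
      constructor
      · rintro ⟨rfl | hy, hyl⟩
        · exact absurd hyl (Set.disjoint_left.mp (hD.layer_disjoint hij hj hi).symm hx)
        · exact ⟨hy, hyl⟩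
      · rintro ⟨hy, hyl⟩
        exact ⟨Or.inr hy, hyl⟩
    rw [h2]
    exact hI.2 j hj

lemma ChainData.base_layer_card (hD : ChainData M F n)
    (hB : (chainMatroid hD).IsBase B) {i : ℕ} (hi : i < n) :
    (B ∩ layer F i).ncard = rk M (F (i + 1)) - rk M (F i) := by
  have hBind : IndN M F n B := (chainMatroid_indep hD).mp hB.indep
  have hle := hD.indN_layer_le hBind hi
  refine le_antisymm (by omega) ?_
  by_contra hlt
  push_neg at hlt
  set A := B ∩ layer F i with hA
  have hFi : F i ⊆ M.E := hD.subset_ground hi.le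
  have hFi1 : F (i + 1) ⊆ M.E := hD.subset_ground hi
  obtain ⟨S, hS, hSrk⟩ := exists_basis_rk hD.hE hFi
  have hSA : M.Indep (S ∪ A) :=
    indep_basis_union_of_rk hD.hE hFi (Set.inter_subset_left.trans hBind.1)
      (hD.inter_layer_disjoint B i) hS (le_of_eq (hBind.2 i hi).symm)
  have hSAsub : S ∪ A ⊆ F (i + 1) :=
    Set.union_subset (hS.subset.trans ((hD.hlt i hi).subset))
      (Set.inter_subset_right.trans Set.diff_subset)
  obtain ⟨T, hT, hsubT⟩ := hSA.subset_isBasis_of_subset hSAsub hFi1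
  have hTfin : T.Finite := hD.hE.subset hT.indep.subset_ground
  have hTcard : T.ncard = rk M (F (i + 1)) := (rk_eq_ncard_of_basis hD.hE hT).symm
  have hTZ : (T ∩ F i).ncard ≤ rk M (F i) :=
    ncard_le_rk hD.hE (hT.indep.subset Set.inter_subset_left) Set.inter_subset_right hFi
  have hsplitT : (T ∩ F i).ncard + (T \ F i).ncard = T.ncard :=
    Set.ncard_inter_add_ncard_diff_eq_ncard T (F i) hTfin
  have hAT : A ⊆ T \ F i := by
    intro y hy
    exact ⟨hsubT (Or.inr hy), fun hyF => (layer_disjoint_self F i).le_bot ⟨hy.2, hyF⟩⟩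
  have hex : ∃ x ∈ T \ F i, x ∉ A := by
    by_contra hcon
    push_neg at hcon
    have : (T \ F i).ncard ≤ A.ncard :=
      Set.ncard_le_ncard hcon (hD.hE.subset (Set.inter_subset_left.trans hBind.1))
    omega
  obtain ⟨x, hxT, hxA⟩ := hex
  have hxL : x ∈ layer F i := ⟨hT.subset hxT.1, hxT.2⟩
  have hxB : x ∉ B := fun h => hxA ⟨h, hxL⟩
  have hSAx : M.Indep (S ∪ insert x A) := by
    refine hT.indep.subset ?_
    rw [Set.union_insert]
    exact Set.insert_subset hxT.1 hsubT
  have hdisj' : Disjoint (insert x A) (F i) := by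
    rw [Set.disjoint_left]
    rintro y (rfl | hy)
    · exact fun hyF => (layer_disjoint_self F i).le_bot ⟨hxL, hyF⟩
    · exact fun hyF => (hD.inter_layer_disjoint B i).le_bot ⟨hy, hyF⟩
  have hcond : rk M (F i ∪ insert x A) = rk M (F i) + (insert x A).ncard :=
    rk_union_eq_of_indep hD.hE hFi hdisj' hS hSAx
  have hindN : IndN M F n (insert x B) :=
    hD.indN_insert hBind hi hxL (hFi1 (hT.subset hxT.1)) hcond
  exact hxB (hB.mem_of_insert_indep ((chainMatroid_indep hD).mpr hindN))

lemma ChainData.base_inter_card (hD : ChainData M F n)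
    (hB : (chainMatroid hD).IsBase B) {j : ℕ} (hj : j ≤ n) :
    (B ∩ F j).ncard = rk M (F j) := by
  have hBind : IndN M F n B := (chainMatroid_indep hD).mp hB.indep
  rw [hD.ncard_inter_chain hBind.1 (hD.hE.subset hBind.1) hj, ← hD.rk_telescope hj]
  exact Finset.sum_congr rfl fun i hi =>
    hD.base_layer_card hB ((Finset.mem_range.mp hi).trans_le hj)

lemma ChainData.base_M_base (hD : ChainData M F n)
    (hB : (chainMatroid hD).IsBase B) : M.IsBase B := by
  have hBind : IndN M F n B := (chainMatroid_indep hD).mp hB.indep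
  have key : ∀ j ≤ n, M.Indep (B ∩ F j) := by
    intro j
    induction j with
    | zero => intro _; rw [hD.h0, Set.inter_empty]; exact M.empty_indep
    | succ j ih =>
      intro hj
      have hj' : j ≤ n := by omega
      have hind : M.Indep (B ∩ F j) := ih hj'
      have hjn : j < n := by omega
      have hbasis : M.IsBasis (B ∩ F j) (F j) :=
        basis_of_indep_rk_le hD.hE hind Set.inter_subset_right (hD.subset_ground hj')
          (le_of_eq (hD.base_inter_card hB hj').symm)
      have hun : M.Indep ((B ∩ F j) ∪ B ∩ layer F j) :=
        indep_basis_union_of_rk hD.hE (hD.subset_ground hj')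
          (Set.inter_subset_left.trans hBind.1) (hD.inter_layer_disjoint B j) hbasis
          (le_of_eq (hBind.2 j hjn).symm)
      have hsplit : B ∩ F (j + 1) = (B ∩ F j) ∪ (B ∩ layer F j) := by
        rw [layer, ← Set.inter_union_distrib_left,
          Set.union_diff_cancel (hD.hlt j hjn).subset]
      rwa [hsplit]
  have hBE : M.Indep B := by
    have := key n le_rfl
    rwa [hD.htop, Set.inter_eq_left.mpr hBind.1] at this
  rw [← Matroid.isBasis_ground_iff]
  refine basis_of_indep_rk_le hD.hE hBE hBind.1 subset_rfl ?_
  have := hD.base_inter_card hB le_rfl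
  rw [hD.htop, Set.inter_eq_left.mpr hBind.1] at this
  rw [this]

lemma ChainData.base_of_M_base (hD : ChainData M F n) (hB : M.IsBase B)
    (hcard : ∀ i ≤ n, (B ∩ F i).ncard = rk M (F i)) : (chainMatroid hD).IsBase B := by
  have hBfin : B.Finite := hD.hE.subset hB.subset_ground
  have hBind : IndN M F n B := by
    refine ⟨hB.subset_ground, fun i hi => ?_⟩
    have hsplit : B ∩ F (i + 1) = (B ∩ F i) ∪ (B ∩ layer F i) := by
      rw [layer, ← Set.inter_union_distrib_left,
        Set.union_diff_cancel (hD.hlt i hi).subset]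
    have hd : Disjoint (B ∩ F i) (B ∩ layer F i) :=
      ((layer_disjoint_self F i).mono_left Set.inter_subset_right).symm.mono_left
        Set.inter_subset_right
    have hcardsplit : (B ∩ F (i + 1)).ncard = (B ∩ F i).ncard + (B ∩ layer F i).ncard := by
      rw [hsplit, Set.ncard_union_eq hd (hBfin.subset Set.inter_subset_left)
        (hBfin.subset Set.inter_subset_left)]
    refine le_antisymm (rk_union_ncard_le hD.hE (hD.subset_ground hi.le)
      ((Set.inter_subset_left.trans hB.subset_ground))) ?_
    have hsub : B ∩ F (i + 1) ⊆ F i ∪ B ∩ layer F i := by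
      rw [hsplit]
      exact Set.union_subset_union_left _ Set.inter_subset_right
    have hge : (B ∩ F (i + 1)).ncard ≤ rk M (F i ∪ B ∩ layer F i) :=
      ncard_le_rk hD.hE (hB.indep.subset Set.inter_subset_left) hsub
        (Set.union_subset (hD.subset_ground hi.le)
          (Set.inter_subset_left.trans hB.subset_ground))
    rw [hcardsplit, hcard i hi.le] at hge
    exact hge
  have hBcard : B.ncard = rk M M.E := by
    have := hcard n le_rfl
    rwa [hD.htop, Set.inter_eq_left.mpr hB.subset_ground] at this
  refine Matroid.Indep.isBase_of_forall_insert ((chainMatroid_indep hD).mpr hBind) ?_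
  rintro e ⟨heE, heB⟩ hins
  have hinsind : IndN M F n (insert e B) := (chainMatroid_indep hD).mp hins
  have hle := hD.indN_ncard_le hinsind
  rw [Set.ncard_insert_of_notMem heB hBfin, hBcard] at hle
  omega

lemma ChainData.exists_good_base (hD : ChainData M F n) :
    ∃ B, M.IsBase B ∧ ∀ i ≤ n, (B ∩ F i).ncard = rk M (F i) := by
  have key : ∀ j ≤ n, ∃ I, M.IsBasis I (F j) ∧ ∀ i ≤ j, (I ∩ F i).ncard = rk M (F i) := by
    intro j
    induction j with
    | zero =>
      intro _
      refine ⟨∅, by rw [hD.h0]; exact M.empty_indep.isBasis_self, fun i hi => ?_⟩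
      rw [Nat.le_zero.mp hi, hD.h0, Set.inter_empty, Set.ncard_empty, rk_empty hD.hE]
    | succ j ih =>
      intro hj
      obtain ⟨I, hI, hIcard⟩ := ih (by omega)
      obtain ⟨I', hI', hII'⟩ := hI.indep.subset_isBasis_of_subset
        (hI.subset.trans (hD.hlt j (by omega)).subset) (hD.subset_ground hj)
      refine ⟨I', hI', fun i hi => ?_⟩
      rcases Nat.lt_or_ge i (j + 1) with h | h
      · have hi' : i ≤ j := by omega
        refine le_antisymm (ncard_le_rk hD.hE (hI'.indep.subset Set.inter_subset_left)
          Set.inter_subset_right (hD.subset_ground (hi.trans hj))) ?_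
        rw [← hIcard i hi']
        exact Set.ncard_le_ncard (Set.inter_subset_inter_left _ hII')
          (hD.hE.subset ((Set.inter_subset_left).trans hI'.indep.subset_ground))
      · have : i = j + 1 := by omega
        subst this
        rw [Set.inter_eq_left.mpr hI'.subset, rk_eq_ncard_of_basis hD.hE hI']
  obtain ⟨B, hB, hBcard⟩ := key n le_rfl
  rw [hD.htop] at hB
  exact ⟨B, Matroid.isBasis_ground_iff.mp hB, hBcard⟩

lemma ChainData.base_iff (hD : ChainData M F n) :
    (chainMatroid hD).IsBase B ↔
      M.IsBase B ∧ ∀ i ≤ n, (B ∩ F i).ncard = rk M (F i) :=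
  ⟨fun h => ⟨hD.base_M_base h, fun _ hi => hD.base_inter_card h hi⟩,
    fun h => hD.base_of_M_base h.1 h.2⟩

lemma exists_layer_basis {M : Matroid α} {Z A : Set α} (hE : M.E.Finite) (hZ : Z ⊆ M.E)
    (hA : A ⊆ M.E) (hdisj : Disjoint A Z) :
    ∃ T ⊆ A, rk M (Z ∪ T) = rk M Z + T.ncard ∧
      T.ncard = rk M (Z ∪ A) - rk M Z := by
  obtain ⟨S, hS, hSrk⟩ := exists_basis_rk hE hZ
  obtain ⟨T', hT', hST'⟩ := hS.indep.subset_isBasis_of_subset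
    (hS.subset.trans Set.subset_union_left) (Set.union_subset hZ hA)
  have hT'fin : T'.Finite := hE.subset hT'.indep.subset_ground
  have hSeq : S = T' ∩ Z := by
    refine Set.eq_of_subset_of_ncard_le (Set.subset_inter hST' hS.subset) ?_
      (hT'fin.subset Set.inter_subset_left)
    have : (T' ∩ Z).ncard ≤ rk M Z :=
      ncard_le_rk hE (hT'.indep.subset Set.inter_subset_left) Set.inter_subset_right hZ
    omega
  have hsplit : (T' ∩ Z).ncard + (T' \ Z).ncard = T'.ncard :=
    Set.ncard_inter_add_ncard_diff_eq_ncard T' Z hT'fin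
  have hT'card : T'.ncard = rk M (Z ∪ A) := (rk_eq_ncard_of_basis hE hT').symm
  have hTA : T' \ Z ⊆ A := by
    intro x hx
    rcases hT'.subset hx.1 with h | h
    · exact absurd h hx.2
    · exact h
  have h5 : (T' ∩ Z).ncard = rk M Z := by rw [← hSeq, ← hSrk]
  refine ⟨T' \ Z, hTA, ?_, by omega⟩
  have hdisj' : Disjoint (T' \ Z) Z := Set.disjoint_sdiff_left
  have hind : M.Indep (S ∪ T' \ Z) := by
    refine hT'.indep.subset ?_
    rw [hSeq, Set.inter_union_diff]
  rw [rk_union_eq_of_indep hE hZ hdisj' hS hind]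

lemma ChainData.chain_rk (hD : ChainData M F n) (hX : X ⊆ M.E) :
    rk (chainMatroid hD) X =
      ∑ i ∈ Finset.range n, (rk M (F i ∪ X ∩ layer F i) - rk M (F i)) := by
  have hNE : (chainMatroid hD).E.Finite := hD.hE
  apply le_antisymm
  · obtain ⟨J, hJ, hJrk⟩ := exists_basis_rk (M := chainMatroid hD) hNE hX
    rw [hJrk]
    have hJind : IndN M F n J := (chainMatroid_indep hD).mp hJ.indep
    rw [hD.ncard_eq_sum_layers hJind.1]
    refine Finset.sum_le_sum fun i hi => ?_
    have hi' := Finset.mem_range.mp hi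
    have h1 := hJind.2 i hi'
    have h2 : rk M (F i ∪ J ∩ layer F i) ≤ rk M (F i ∪ X ∩ layer F i) :=
      rk_mono hD.hE
        (Set.union_subset_union_right _ (Set.inter_subset_inter_left _ hJ.subset))
        (Set.union_subset (hD.subset_ground hi'.le) (Set.inter_subset_left.trans hX))
    omega
  · have hch : ∀ i, ∃ Ti, Ti ⊆ X ∩ layer F i ∧ (i < n →
        rk M (F i ∪ Ti) = rk M (F i) + Ti.ncard ∧
        Ti.ncard = rk M (F i ∪ X ∩ layer F i) - rk M (F i)) := by
      intro i
      by_cases hi : i < n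
      · obtain ⟨T, hT1, hT2, hT3⟩ := exists_layer_basis hD.hE (hD.subset_ground hi.le)
          (Set.inter_subset_left.trans hX)
          ((layer_disjoint_self F i).mono_left Set.inter_subset_right)
        exact ⟨T, hT1, fun _ => ⟨hT2, hT3⟩⟩
      · exact ⟨∅, Set.empty_subset _, fun h => absurd h hi⟩
    choose T hTsub hTspec using hch
    set I : Set α := ⋃ i ∈ Finset.range n, T i with hIdef
    have hIX : I ⊆ X := by
      refine Set.iUnion₂_subset fun i _ => (hTsub i).trans Set.inter_subset_left
    have hIE : I ⊆ M.E := hIX.trans hX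
    have hIL : ∀ j < n, I ∩ layer F j = T j := by
      intro j hj
      apply Set.Subset.antisymm
      · rintro x ⟨hxI, hxL⟩
        obtain ⟨i, hi, hxT⟩ := Set.mem_iUnion₂.mp hxI
        by_cases hij : i = j
        · exact hij ▸ hxT
        · have hxLi : x ∈ layer F i := ((hTsub i) hxT).2
          exact absurd hxL (Set.disjoint_left.mp
            (hD.layer_disjoint hij (Finset.mem_range.mp hi) hj) hxLi)
      · intro x hx
        exact ⟨Set.mem_iUnion₂.mpr ⟨j, Finset.mem_range.mpr hj, hx⟩, ((hTsub j) hx).2⟩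
    have hIind : IndN M F n I := by
      refine ⟨hIE, fun j hj => ?_⟩
      rw [hIL j hj]
      exact (hTspec j hj).1
    have hcard : I.ncard = ∑ i ∈ Finset.range n, (T i).ncard := by
      rw [hD.ncard_eq_sum_layers hIE]
      exact Finset.sum_congr rfl fun i hi => by rw [hIL i (Finset.mem_range.mp hi)]
    calc ∑ i ∈ Finset.range n, (rk M (F i ∪ X ∩ layer F i) - rk M (F i))
        = ∑ i ∈ Finset.range n, (T i).ncard :=
          Finset.sum_congr rfl fun i hi => ((hTspec i (Finset.mem_range.mp hi)).2).symm
      _ = I.ncard := hcard.symm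
      _ ≤ rk (chainMatroid hD) X :=
          ncard_le_rk hNE ((chainMatroid_indep hD).mpr hIind) hIX hX

lemma ChainData.chain_rk_ground (hD : ChainData M F n) :
    rk (chainMatroid hD) M.E = rk M M.E := by
  have hNE : (chainMatroid hD).E.Finite := hD.hE
  obtain ⟨B, hB, hBcard⟩ := hD.exists_good_base
  have hNB : (chainMatroid hD).IsBase B := hD.base_of_M_base hB hBcard
  have h1 : rk (chainMatroid hD) ((chainMatroid hD).E) = B.ncard :=
    rk_eq_ncard_of_basis hNE hNB.isBasis_ground
  rw [chainMatroid_ground] at h1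
  rw [h1, rk_eq_ncard_of_basis hD.hE hB.isBasis_ground]

end ChainMatroid2

/-! ### Polynomial lemmas -/

section PolyLemmas

lemma finsum_subsets_eq_powerset_sum {R : Type*} [AddCommMonoid R] {A : Set α}
    (hA : A.Finite) (f : Set α → R) :
    ∑ᶠ S ∈ {S : Set α | S ⊆ A}, f S = ∑ T ∈ hA.toFinset.powerset, f ↑T := by
  have hset : {S : Set α | S ⊆ A} =
      ↑(hA.toFinset.powerset.image (fun T : Finset α => (T : Set α))) := by
    ext S
    simp only [Set.mem_setOf_eq, Finset.coe_image, Set.mem_image, Finset.mem_coe,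
      Finset.mem_powerset]
    constructor
    · intro hS
      have hSfin : S.Finite := hA.subset hS
      refine ⟨hSfin.toFinset, ?_, by simp⟩
      intro x hx
      rw [Set.Finite.mem_toFinset] at *
      exact hS (by simpa using hx)
    · rintro ⟨T, hT, rfl⟩
      intro x hx
      have := hT hx
      rwa [Set.Finite.mem_toFinset] at this
  rw [hset, finsum_mem_coe_finset, Finset.sum_image]
  intro x _ y _ hxy
  exact Finset.coe_injective hxy

lemma powerset_sum_mul_split {R : Type*} [CommRing R] (a b : Finset α)
    (hab : Disjoint a b) (f g : Finset α → R) :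
    ∑ T ∈ (a ∪ b).powerset, f (T ∩ a) * g (T ∩ b) =
      (∑ T ∈ a.powerset, f T) * (∑ T ∈ b.powerset, g T) := by
  rw [Finset.sum_mul_sum, ← Finset.sum_product']
  refine (Finset.sum_bij' (fun (p : Finset α × Finset α) _ => p.1 ∪ p.2)
    (fun T _ => (T ∩ a, T ∩ b)) ?_ ?_ ?_ ?_ ?_).symm
  · rintro ⟨p1, p2⟩ hp
    rw [Finset.mem_product] at hp
    simp only [Finset.mem_powerset] at *
    exact Finset.union_subset (hp.1.trans Finset.subset_union_left)
      (hp.2.trans Finset.subset_union_right)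
  · intro T hT
    rw [Finset.mem_product]
    simp only [Finset.mem_powerset]
    exact ⟨Finset.inter_subset_right, Finset.inter_subset_right⟩
  · rintro ⟨p1, p2⟩ hp
    rw [Finset.mem_product] at hp
    simp only [Finset.mem_powerset] at hp
    have h1 : (p1 ∪ p2) ∩ a = p1 := by
      rw [Finset.union_inter_distrib_right, Finset.inter_eq_left.mpr hp.1,
        (Finset.disjoint_iff_inter_eq_empty.mp ((hab.symm.mono_left hp.2))),
        Finset.union_empty]
    have h2 : (p1 ∪ p2) ∩ b = p2 := by
      rw [Finset.union_inter_distrib_right, Finset.inter_eq_left.mpr hp.2,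
        (Finset.disjoint_iff_inter_eq_empty.mp ((hab.mono_left hp.1))),
        Finset.empty_union]
    simp [h1, h2]
  · intro T hT
    rw [Finset.mem_powerset] at hT
    simp [← Finset.inter_union_distrib_left, Finset.inter_eq_left.mpr hT]
  · rintro ⟨p1, p2⟩ hp
    rw [Finset.mem_product] at hp
    simp only [Finset.mem_powerset] at hp
    have h1 : (p1 ∪ p2) ∩ a = p1 := by
      rw [Finset.union_inter_distrib_right, Finset.inter_eq_left.mpr hp.1,
        (Finset.disjoint_iff_inter_eq_empty.mp ((hab.symm.mono_left hp.2))),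
        Finset.union_empty]
    have h2 : (p1 ∪ p2) ∩ b = p2 := by
      rw [Finset.union_inter_distrib_right, Finset.inter_eq_left.mpr hp.2,
        (Finset.disjoint_iff_inter_eq_empty.mp ((hab.mono_left hp.1))),
        Finset.empty_union]
    simp [h1, h2]

lemma sub_one_dvd_of_eval_one (p : Polynomial ℤ) (h : p.eval 1 = 0) :
    (X : Polynomial ℤ) - 1 ∣ p := by
  have := (Polynomial.dvd_iff_isRoot (p := p) (a := 1)).mpr h
  rwa [Polynomial.C_1] at this

lemma sub_one_dvd_alt_sum (L : Finset α) (hL : L.Nonempty) (e : Finset α → ℕ) :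
    (X : Polynomial ℤ) - 1 ∣
      ∑ T ∈ L.powerset, (-1 : Polynomial ℤ) ^ T.card * X ^ e T := by
  refine sub_one_dvd_of_eval_one _ ?_
  rw [Polynomial.eval_finset_sum]
  simp only [Polynomial.eval_mul, Polynomial.eval_pow, Polynomial.eval_neg,
    Polynomial.eval_one, Polynomial.eval_X, one_pow, mul_one]
  exact Finset.sum_powerset_neg_one_pow_card_of_nonempty hL

lemma qfact : ∀ (m : ℕ) (a : Finset α) (L : ℕ → Finset α) (g : ℕ → Finset α → ℕ),
    (∀ i < m, (L i).Nonempty) →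
    (∀ i j, i < j → j < m → Disjoint (L i) (L j)) →
    a = Finset.biUnion (Finset.range m) L →
    ((X : Polynomial ℤ) - 1) ^ m ∣ ∑ T ∈ a.powerset, (-1 : Polynomial ℤ) ^ T.card *
      X ^ (∑ i ∈ Finset.range m, (g i (L i) - g i (T ∩ L i))) := by
  intro m
  induction m with
  | zero =>
    intro a L g _ _ ha
    simp [ha]
  | succ m ih =>
    intro a L g hne hdisj ha
    set b := Finset.biUnion (Finset.range m) L with hb
    have hLb : ∀ i < m, L i ⊆ b := fun i hi =>
      Finset.subset_biUnion_of_mem L (Finset.mem_range.mpr hi)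
    have hdisj' : Disjoint b (L m) := by
      rw [hb, Finset.disjoint_biUnion_left]
      intro i hi
      exact hdisj i m (Finset.mem_range.mp hi) (by omega)
    have hab : a = b ∪ L m := by
      rw [ha, hb, Finset.range_add_one, Finset.biUnion_insert, Finset.union_comm]
    have key : ∀ T ∈ a.powerset,
        (-1 : Polynomial ℤ) ^ T.card *
          X ^ (∑ i ∈ Finset.range (m + 1), (g i (L i) - g i (T ∩ L i))) =
        ((-1 : Polynomial ℤ) ^ (T ∩ b).card *
          X ^ (∑ i ∈ Finset.range m, (g i (L i) - g i ((T ∩ b) ∩ L i)))) *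
        ((-1 : Polynomial ℤ) ^ (T ∩ L m).card *
          X ^ (g m (L m) - g m (T ∩ L m))) := by
      intro T hT
      rw [Finset.mem_powerset, hab] at hT
      have hcard : T.card = (T ∩ b).card + (T ∩ L m).card := by
        rw [← Finset.card_union_of_disjoint
          ((hdisj'.mono_left Finset.inter_subset_right).mono_right
            Finset.inter_subset_right),
          ← Finset.inter_union_distrib_left, Finset.inter_eq_left.mpr hT]
      have hTL : ∀ i < m, (T ∩ b) ∩ L i = T ∩ L i := fun i hi => by
        rw [Finset.inter_assoc, Finset.inter_eq_right.mpr (hLb i hi)]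
      rw [Finset.sum_range_succ, hcard, pow_add]
      have hexp : ∑ i ∈ Finset.range m, (g i (L i) - g i ((T ∩ b) ∩ L i)) =
          ∑ i ∈ Finset.range m, (g i (L i) - g i (T ∩ L i)) :=
        Finset.sum_congr rfl fun i hi => by rw [hTL i (Finset.mem_range.mp hi)]
      rw [hexp, pow_add]
      ring
    rw [Finset.sum_congr rfl key, hab, powerset_sum_mul_split b (L m) hdisj'
      (fun U => (-1 : Polynomial ℤ) ^ U.card *
        X ^ (∑ i ∈ Finset.range m, (g i (L i) - g i (U ∩ L i))))
      (fun V => (-1 : Polynomial ℤ) ^ V.card * X ^ (g m (L m) - g m V))]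
    rw [pow_succ]
    exact mul_dvd_mul
      (ih b L g (fun i hi => hne i (by omega)) (fun i j hij hj => hdisj i j hij (by omega)) rfl)
      (sub_one_dvd_alt_sum (L m) (hne m (by omega)) _)

end PolyLemmas

section CharPoly

variable {M : Matroid α} {F : ℕ → Set α} {n : ℕ}

lemma charPoly_eq_powerset_sum (M : Matroid α) (hE : M.E.Finite) :
    charPoly M = ∑ T ∈ hE.toFinset.powerset,
      (-1 : Polynomial ℤ) ^ T.card * X ^ (rk M M.E - rk M ↑T) := by
  rw [charPoly, finsum_subsets_eq_powerset_sum hE]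
  refine Finset.sum_congr rfl fun T _ => ?_
  rw [Set.ncard_coe_finset, zsmul_eq_mul]
  push_cast
  ring

lemma redCharPoly_eq_powerset_sum (M : Matroid α) (hE : M.E.Finite) :
    redCharPoly M = ∑ T ∈ hE.toFinset.powerset,
      (-1 : Polynomial ℤ) ^ T.card * qAnalogue (rk M M.E - rk M ↑T) := by
  rw [redCharPoly, finsum_subsets_eq_powerset_sum hE]
  refine Finset.sum_congr rfl fun T _ => ?_
  rw [Set.ncard_coe_finset, zsmul_eq_mul]
  push_cast
  ring

lemma sub_one_mul_redCharPoly (M : Matroid α) (hE : M.E.Finite) (hne : M.E.Nonempty) :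
    ((X : Polynomial ℤ) - 1) * redCharPoly M = charPoly M := by
  rw [redCharPoly_eq_powerset_sum M hE, charPoly_eq_powerset_sum M hE, Finset.mul_sum]
  have hterm : ∀ T ∈ hE.toFinset.powerset,
      ((X : Polynomial ℤ) - 1) * ((-1 : Polynomial ℤ) ^ T.card *
        qAnalogue (rk M M.E - rk M ↑T)) =
      (-1 : Polynomial ℤ) ^ T.card * X ^ (rk M M.E - rk M ↑T)
        - (-1 : Polynomial ℤ) ^ T.card := by
    intro T _
    have hgeo : ((X : Polynomial ℤ) - 1) * qAnalogue (rk M M.E - rk M ↑T) =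
        X ^ (rk M M.E - rk M ↑T) - 1 := by
      rw [qAnalogue, mul_comm, geom_sum_mul]
    calc ((X : Polynomial ℤ) - 1) * ((-1 : Polynomial ℤ) ^ T.card *
          qAnalogue (rk M M.E - rk M ↑T))
        = (-1 : Polynomial ℤ) ^ T.card *
          (((X : Polynomial ℤ) - 1) * qAnalogue (rk M M.E - rk M ↑T)) := by ring
      _ = (-1 : Polynomial ℤ) ^ T.card * (X ^ (rk M M.E - rk M ↑T) - 1) := by rw [hgeo]
      _ = (-1 : Polynomial ℤ) ^ T.card * X ^ (rk M M.E - rk M ↑T)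
          - (-1 : Polynomial ℤ) ^ T.card := by ring
  rw [Finset.sum_congr rfl hterm, Finset.sum_sub_distrib]
  have hzero : (∑ T ∈ hE.toFinset.powerset, (-1 : Polynomial ℤ) ^ T.card) = 0 := by
    have h1 : hE.toFinset.Nonempty := by
      rwa [Set.Finite.toFinset_nonempty]
    have h2 := Finset.sum_powerset_neg_one_pow_card_of_nonempty h1
    have h3 : (∑ T ∈ hE.toFinset.powerset, (-1 : Polynomial ℤ) ^ T.card) =
        (((∑ T ∈ hE.toFinset.powerset, (-1 : ℤ) ^ T.card) : ℤ) : Polynomial ℤ) := by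
      push_cast
      rfl
    rw [h3, h2]
    simp
  rw [hzero, sub_zero]

/-- The main divisibility: `(X-1)^n` divides the characteristic polynomial of the
layered matroid of a chain of length `n`. -/
lemma ChainData.charPoly_dvd (hD : ChainData M F n) :
    ((X : Polynomial ℤ) - 1) ^ n ∣ charPoly (chainMatroid hD) := by
  classical
  have hNE : (chainMatroid hD).E.Finite := hD.hE
  set Lfin : ℕ → Finset α := fun i => hD.hE.toFinset.filter (· ∈ layer F i) with hLfin
  have hLcoe : ∀ i < n, (Lfin i : Set α) = layer F i := by
    intro i hi
    ext x
    simp only [hLfin, Finset.coe_filter, Set.mem_setOf_eq, Set.Finite.mem_toFinset]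
    exact ⟨fun h => h.2, fun h => ⟨hD.layer_subset_ground hi h, h⟩⟩
  have hground : ∀ x ∈ M.E, ∃ i < n, x ∈ layer F i := by
    have key : ∀ j ≤ n, ∀ x ∈ F j, ∃ i < j, x ∈ layer F i := by
      intro j
      induction j with
      | zero => intro _ x hx; rw [hD.h0] at hx; exact absurd hx (Set.notMem_empty x)
      | succ j ih =>
        intro hj x hx
        by_cases hxj : x ∈ F j
        · obtain ⟨i, hi, hxi⟩ := ih (by omega) x hxj
          exact ⟨i, by omega, hxi⟩
        · exact ⟨j, by omega, hx, hxj⟩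
    intro x hx
    exact key n le_rfl x (hD.htop ▸ hx)
  have hbiUnion : hD.hE.toFinset = Finset.biUnion (Finset.range n) Lfin := by
    apply Finset.coe_injective
    rw [Finset.coe_biUnion]
    ext x
    simp only [Set.Finite.coe_toFinset, Set.mem_iUnion, Finset.mem_coe,
      Finset.mem_range]
    constructor
    · intro hx
      obtain ⟨i, hi, hxi⟩ := hground x hx
      refine ⟨i, hi, ?_⟩
      have := hLcoe i hi
      rw [← Finset.mem_coe, this]
      exact hxi
    · rintro ⟨i, hi, hxi⟩
      rw [← Finset.mem_coe, hLcoe i hi] at hxi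
      exact hD.layer_subset_ground hi hxi
  set g : ℕ → Finset α → ℕ := fun i U => rk M (F i ∪ ↑U) - rk M (F i) with hg
  rw [charPoly_eq_powerset_sum (chainMatroid hD) hNE]
  have hexp : ∀ T ∈ hNE.toFinset.powerset,
      rk (chainMatroid hD) (chainMatroid hD).E - rk (chainMatroid hD) ↑T =
        ∑ i ∈ Finset.range n, (g i (Lfin i) - g i (T ∩ Lfin i)) := by
    intro T hT
    rw [Finset.mem_powerset] at hT
    have hTsub : (T : Set α) ⊆ M.E := by
      intro x hx
      have := hT hx
      rwa [Set.Finite.mem_toFinset] at this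
    have h1 : rk (chainMatroid hD) (chainMatroid hD).E = rk M M.E :=
      hD.chain_rk_ground
    have h2 : rk M M.E = ∑ i ∈ Finset.range n, g i (Lfin i) := by
      have := hD.chain_rk (X := M.E) subset_rfl
      rw [hD.chain_rk_ground] at this
      rw [this]
      refine Finset.sum_congr rfl fun i hi => ?_
      simp only [hg]
      congr 2
      rw [hLcoe i (Finset.mem_range.mp hi),
        Set.inter_eq_right.mpr (hD.layer_subset_ground (Finset.mem_range.mp hi))]
    have h3 : rk (chainMatroid hD) ↑T = ∑ i ∈ Finset.range n, g i (T ∩ Lfin i) := by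
      rw [hD.chain_rk hTsub]
      refine Finset.sum_congr rfl fun i hi => ?_
      simp only [hg]
      congr 2
      rw [Finset.coe_inter, hLcoe i (Finset.mem_range.mp hi)]
    rw [h1, h2, h3, ← Finset.sum_tsub_distrib]
    intro i hi
    have hi' := Finset.mem_range.mp hi
    simp only [hg]
    have hmono : rk M (F i ∪ ↑(T ∩ Lfin i)) ≤ rk M (F i ∪ ↑(Lfin i)) := by
      refine rk_mono hD.hE (Set.union_subset_union_right _ ?_) ?_
      · rw [Finset.coe_inter]
        exact Set.inter_subset_right
      · rw [hLcoe i hi']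
        exact Set.union_subset (hD.subset_ground hi'.le) (hD.layer_subset_ground hi')
    omega
  rw [Finset.sum_congr rfl fun T hT => by rw [hexp T hT]]
  have hTfin : hNE.toFinset = hD.hE.toFinset := by
    rfl
  rw [hTfin]
  refine qfact n hD.hE.toFinset Lfin g ?_ ?_ hbiUnion
  · intro i hi
    obtain ⟨x, hx1, hx2⟩ := Set.exists_of_ssubset (hD.hlt i hi)
    refine ⟨x, ?_⟩
    rw [← Finset.mem_coe, hLcoe i hi]
    exact ⟨hx1, hx2⟩
  · intro i j hij hj
    rw [← Finset.disjoint_coe, hLcoe i (by omega), hLcoe j hj]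
    exact hD.layer_disjoint (by omega) (by omega) hj

end CharPoly


/-! ### From flags to chains -/

lemma exists_chain_list : ∀ C : Finset (Set α), IsChain (· ⊆ ·) (C : Set (Set α)) →
    ∃ l : List (Set α), l.toFinset = C ∧ l.Pairwise (· ⊂ ·) := by
  intro C
  induction C using Finset.strongInduction with
  | _ C ih =>
    intro hchain
    rcases C.eq_empty_or_nonempty with rfl | hne
    · exact ⟨[], by simp, List.Pairwise.nil⟩
    · obtain ⟨G, hG, hGmin⟩ := C.exists_minimal hne
      have herase : C.erase G ⊂ C := Finset.erase_ssubset hG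
      have hchain' : IsChain (· ⊆ ·) ((C.erase G : Finset (Set α)) : Set (Set α)) :=
        hchain.mono fun x hx =>
          Finset.mem_coe.mpr (Finset.mem_of_mem_erase (Finset.mem_coe.mp hx))
      obtain ⟨l, hl1, hl2⟩ := ih _ herase hchain'
      refine ⟨G :: l, ?_, ?_⟩
      · rw [List.toFinset_cons, hl1, Finset.insert_erase hG]
      · rw [List.pairwise_cons]
        refine ⟨fun H hH => ?_, hl2⟩
        have hHC : H ∈ C.erase G := by rw [← hl1]; exact List.mem_toFinset.mpr hH
        have hHne : H ≠ G := Finset.ne_of_mem_erase hHC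
        have hHC' : H ∈ C := Finset.mem_of_mem_erase hHC
        rcases hchain (Finset.mem_coe.mpr hG) (Finset.mem_coe.mpr hHC') (Ne.symm hHne) with
          h | h
        · exact h.ssubset_of_ne (Ne.symm hHne)
        · exact absurd (Set.Subset.antisymm h (hGmin hHC' h)) hHne

lemma flagWeight_sum {M : Matroid α} (hE : M.E.Finite) (C : Finset (Set α)) {B : Set α}
    (hB : B ⊆ M.E) :
    ∑ᶠ e ∈ B, flagWeight C e = ∑ G ∈ C, ((B ∩ G).ncard : ℝ) := by
  have hBfin : B.Finite := hE.subset hB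
  rw [← Set.Finite.coe_toFinset hBfin, finsum_mem_coe_finset]
  simp only [flagWeight]
  rw [Finset.sum_comm]
  refine Finset.sum_congr rfl fun G _ => ?_
  rw [Finset.sum_boole]
  congr 1
  rw [← Set.ncard_coe_finset]
  congr 1
  ext x
  simp only [Finset.coe_filter, Set.mem_setOf_eq, Set.Finite.mem_toFinset,
    Set.mem_inter_iff, Set.Finite.coe_toFinset]

theorem pow_sub_one_dvd_redCharPoly_flagMatroid (M : Matroid α) (hE : M.E.Finite)
    (hM : Loopless M) {C : Finset (Set α)} (hC : C ∈ flagsCirc M) :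
    ((X : Polynomial ℤ) - 1) ^ C.card ∣ redCharPoly (flagMatroid M C) := by
  obtain ⟨⟨hflats, hchain⟩, hEC⟩ := hC
  rcases C.eq_empty_or_nonempty with rfl | hCne
  · simpa using one_dvd _
  obtain ⟨l, hl1, hl2⟩ := exists_chain_list C hchain
  have hlnd : l.Nodup := hl2.imp fun h => (Set.ssubset_iff_subset_ne.mp h).2
  have hllen : l.length = C.card := by rw [← hl1, List.toFinset_card_of_nodup hlnd]
  set k := l.length with hk
  have hkpos : 0 < k := by
    rcases Nat.eq_zero_or_pos k with h | h
    · rw [List.length_eq_zero_iff] at h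
      rw [h] at hl1
      simp at hl1
      exact absurd hl1.symm (Finset.nonempty_iff_ne_empty.mp hCne)
    · exact h
  set Fc : ℕ → Set α := fun i => if i = 0 then (∅ : Set α) else l.getD (i - 1) M.E with hF
  have hCE : ∀ G ∈ C, G ⊆ M.E := fun G hG => (hflats G hG).1.subset_ground
  have hCnonempty : ∀ G ∈ C, G.Nonempty := by
    intro G hG
    have h := (hflats G hG).2
    rw [hM] at h
    exact Set.empty_ssubset.mp h
  have hgetmem : ∀ (j : ℕ) (hj : j < k), l.get ⟨j, hj⟩ ∈ C := by
    intro j hj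
    rw [← hl1]
    exact List.mem_toFinset.mpr (l.get_mem _)
  have hFget : ∀ i, 1 ≤ i → i ≤ k → ∀ (h : i - 1 < k), Fc i = l.get ⟨i - 1, h⟩ := by
    intro i h1 h2 h3
    simp only [hF, if_neg (by omega : ¬ i = 0)]
    exact List.getD_eq_getElem l M.E h3
  have hmem : ∀ i, 1 ≤ i → i ≤ k → Fc i ∈ C := by
    intro i h1 h2
    rw [hFget i h1 h2 (by omega)]
    exact hgetmem _ _
  have hmem' : ∀ G ∈ C, ∃ i, 1 ≤ i ∧ i ≤ k ∧ Fc i = G := by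
    intro G hG
    rw [← hl1] at hG
    obtain ⟨⟨j, hj⟩, rfl⟩ := List.mem_iff_get.mp (List.mem_toFinset.mp hG)
    exact ⟨j + 1, by omega, by omega, hFget (j + 1) (by omega) (by omega) (by omega)⟩
  have hFtop : Fc (k + 1) = M.E := by
    simp only [hF, if_neg (by omega : ¬ k + 1 = 0)]
    exact List.getD_eq_default l M.E (by omega)
  have hgetlt := List.pairwise_iff_get.mp hl2
  have hD : ChainData M Fc (k + 1) := by
    refine ⟨hE, by simp [hF], hFtop, ?_⟩
    intro i hi
    rcases Nat.eq_zero_or_pos i with rfl | hipos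
    · have h1 : Fc 1 ∈ C := hmem 1 le_rfl hkpos
      have h0 : Fc 0 = ∅ := by simp [hF]
      rw [h0]
      exact Set.empty_ssubset.mpr (hCnonempty _ h1)
    rcases Nat.lt_or_ge i k with hik | hik
    · rw [hFget i hipos (by omega) (by omega),
        hFget (i + 1) (by omega) (by omega) (by omega)]
      exact hgetlt ⟨i - 1, by omega⟩ ⟨i, by omega⟩ (by simp; omega)
    · have hik' : i = k := by omega
      subst hik'
      rw [hFtop]
      have hmemk : Fc k ∈ C := hmem k hkpos le_rfl
      refine Set.ssubset_iff_subset_ne.mpr ⟨hCE _ hmemk, fun h => hEC (h ▸ hmemk)⟩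
  set N := chainMatroid hD with hN
  set w := flagWeight C with hw
  set W : ℝ := ∑ G ∈ C, (rk M G : ℝ) with hW
  have hwB : ∀ B, B ⊆ M.E → ∑ᶠ e ∈ B, w e = ∑ G ∈ C, ((B ∩ G).ncard : ℝ) :=
    fun B hB => flagWeight_sum hE C hB
  have hwle : ∀ B, M.IsBase B → ∑ᶠ e ∈ B, w e ≤ W := by
    intro B hB
    rw [hwB B hB.subset_ground]
    refine Finset.sum_le_sum fun G hG => Nat.cast_le.mpr
      (ncard_le_rk hE (hB.indep.subset Set.inter_subset_left) Set.inter_subset_right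
        (hCE G hG))
  have hweq : ∀ B, M.IsBase B →
      ((∑ᶠ e ∈ B, w e = W) ↔ ∀ G ∈ C, (B ∩ G).ncard = rk M G) := by
    intro B hB
    rw [hwB B hB.subset_ground, hW]
    constructor
    · intro h G hG
      by_contra hne2
      have hle : ∀ G' ∈ C, ((B ∩ G').ncard : ℝ) ≤ (rk M G' : ℝ) := fun G' hG' =>
        Nat.cast_le.mpr (ncard_le_rk hE (hB.indep.subset Set.inter_subset_left)
          Set.inter_subset_right (hCE G' hG'))
      have hlt : ((B ∩ G).ncard : ℝ) < (rk M G : ℝ) :=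
        lt_of_le_of_ne (hle G hG) (by exact_mod_cast hne2)
      have := Finset.sum_lt_sum hle ⟨G, hG, hlt⟩
      exact absurd h (ne_of_lt this)
    · intro h
      exact Finset.sum_congr rfl fun G hG => by rw [h G hG]
  obtain ⟨B₀, hB₀, hB₀c⟩ := hD.exists_good_base
  have hB₀w : ∑ᶠ e ∈ B₀, w e = W := by
    rw [hweq B₀ hB₀]
    intro G hG
    obtain ⟨i, h1, h2, rfl⟩ := hmem' G hG
    exact hB₀c i (by omega)
  have hwt : wt M w = W :=
    IsGreatest.csSup_eq ⟨⟨B₀, hB₀, hB₀w.symm⟩, by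
      rintro x ⟨B, hB, rfl⟩
      exact hwle B hB⟩
  have hNbase : ∀ B, N.IsBase B ↔ (M.IsBase B ∧ ∑ᶠ e ∈ B, w e = wt M w) := by
    intro B
    rw [hN, hD.base_iff, hwt]
    constructor
    · rintro ⟨hB, hcount⟩
      refine ⟨hB, (hweq B hB).mpr fun G hG => ?_⟩
      obtain ⟨i, h1, h2, rfl⟩ := hmem' G hG
      exact hcount i (by omega)
    · rintro ⟨hB, hw'⟩
      refine ⟨hB, fun i hi => ?_⟩
      rcases Nat.eq_zero_or_pos i with rfl | hipos
      · have h0 : Fc 0 = ∅ := by simp [hF]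
        rw [h0, Set.inter_empty, Set.ncard_empty, rk_empty hE]
      rcases Nat.lt_or_ge i (k + 1) with hik | hik
      · exact (hweq B hB).mp hw' _ (hmem i hipos (by omega))
      · have hik' : i = k + 1 := by omega
        subst hik'
        rw [hFtop, Set.inter_eq_left.mpr hB.subset_ground,
          rk_eq_ncard_of_basis hE hB.isBasis_ground]
  have hex : ∃ N' : Matroid α, N'.E = M.E ∧
      ∀ B, N'.IsBase B ↔ M.IsBase B ∧ ∑ᶠ e ∈ B, w e = wt M w :=
    ⟨N, rfl, hNbase⟩
  have hflag : flagMatroid M C = N := by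
    rw [flagMatroid, initialMatroid, dif_pos hex]
    have hspec := hex.choose_spec
    refine Matroid.ext_isBase (hspec.1.trans rfl) fun B _ => ?_
    rw [hspec.2 B, hNbase B]
  rw [hflag]
  have hEne : M.E.Nonempty := by
    obtain ⟨G, hG⟩ := hCne
    exact (hCnonempty G hG).mono (hCE G hG)
  have hdvd := hD.charPoly_dvd
  rw [← sub_one_mul_redCharPoly N hD.hE hEne] at hdvd
  have hfac : ((X : Polynomial ℤ) - 1) ^ (k + 1) =
      ((X : Polynomial ℤ) - 1) * ((X : Polynomial ℤ) - 1) ^ k := by ring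
  rw [hfac] at hdvd
  have hXne : ((X : Polynomial ℤ) - 1) ≠ 0 := by
    rw [← Polynomial.C_1]
    exact Polynomial.X_sub_C_ne_zero 1
  have hfinal := (mul_dvd_mul_iff_left hXne).mp hdvd
  rwa [← hllen]

end MatroidZeta
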